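/- In the setting of the moment relaxation of the PSAA model (minimize $\langle f_N, y\rangle + \epsilon\|y\|$ with $\epsilon > 0$ over $y_0 = 1$, $M_{d_0}[y] \succeq 0$, $L_{g_i}^{(d_0)}[y] \succeq 0$): if the relaxation is tight, i.e., its optimal value equals the optimal value of the PSAA problem $\min \{f_N(\bar{x}) + \epsilon\|[\bar{x}]_{2d_0}\| : \bar{x} \in \Delta\}$, then any global minimizer $y^*$ of the relaxation satisfies $\mathrm{rank}\, M_{d_0}[y^*] = 1$. In fact, $y^* = [u^*]_{2d_0}$ for the minimizer $u^*$ of the PSAA problem, and $y^*$ is the unique minimizer of the relaxation. -/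

import Mathlib

noncomputable section

/-- Index set of monomial exponents of degree at most `d` in `n` variables. -/
def Idx (n d : ℕ) := {α : Fin n → Fin (d + 1) // ∑ i, (α i : ℕ) ≤ d}

instance (n d : ℕ) : Fintype (Idx n d) := by unfold Idx; infer_instance

/-- The moment matrix `M_d[y]`. -/
def momMat (n d : ℕ) (y : (Fin n → ℕ) → ℝ) : Matrix (Idx n d) (Idx n d) ℝ :=
  Matrix.of fun a b => y (fun i => (a.1 i : ℕ) + (b.1 i : ℕ))

/-- The monomial `u^α`. -/
def mono {n : ℕ} (u : Fin n → ℝ) (α : Fin n → ℕ) : ℝ := ∏ i, u i ^ α i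

/-- The localizing matrix of `g` with index degree at most `m`. -/
def locMat {n : ℕ} (g : MvPolynomial (Fin n) ℝ) (m : ℕ)
    (y : (Fin n → ℕ) → ℝ) : Matrix (Idx n m) (Idx n m) ℝ :=
  Matrix.of fun a b =>
    ∑ γ ∈ g.support, g.coeff γ * y (fun i => γ i + (a.1 i : ℕ) + (b.1 i : ℕ))

/-- The Riesz pairing `⟨f, y⟩ = ∑_α f_α y_α`. -/
def riesz {n : ℕ} (f : MvPolynomial (Fin n) ℝ) (y : (Fin n → ℕ) → ℝ) : ℝ :=
  ∑ γ ∈ f.support, f.coeff γ * y (fun i => γ i)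

/-- The Euclidean norm of the truncation of `y` to degree `d`. -/
def tmsNorm (n d : ℕ) (y : (Fin n → ℕ) → ℝ) : ℝ :=
  Real.sqrt (∑ a : Idx n d, (y (fun i => (a.1 i : ℕ))) ^ 2)

/-- Feasibility for the moment relaxation of the PSAA model over the simplex,
with constraints `g = (x₁, …, xₙ, 1 - eᵀx)`. -/
def Feas (n d0 : ℕ) (y : (Fin n → ℕ) → ℝ) : Prop :=
  y 0 = 1 ∧ (momMat n d0 y).PosSemidef ∧
  (∀ i : Fin n, (locMat (MvPolynomial.X i) (d0 - 1) y).PosSemidef) ∧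
  (locMat (1 - ∑ i : Fin n, MvPolynomial.X i) (d0 - 1) y).PosSemidef


section Helpers
open Matrix

-- helpers
def vecOf (n d : ℕ) (y : (Fin n → ℕ) → ℝ) : EuclideanSpace ℝ (Idx n d) :=
  WithLp.toLp 2 (fun a : Idx n d => y (fun i => (a.1 i : ℕ)))

lemma tmsNorm_eq (n d : ℕ) (y : (Fin n → ℕ) → ℝ) : tmsNorm n d y = ‖vecOf n d y‖ := by
  have h : ∑ a : Idx n d, (y (fun i => (a.1 i : ℕ))) ^ 2 = ∑ a : Idx n d, ‖vecOf n d y a‖ ^ 2 :=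
    Finset.sum_congr rfl fun a _ => by rw [Real.norm_eq_abs, sq_abs]; rfl
  rw [tmsNorm, h, ← EuclideanSpace.norm_eq]

lemma mono_funadd {n : ℕ} (u : Fin n → ℝ) (α β : Fin n → ℕ) :
    mono u (fun i => α i + β i) = mono u α * mono u β := by
  simp [mono, pow_add, Finset.prod_mul_distrib]

lemma smul_vecMulVec_posSemidef {ι : Type*} [Fintype ι] {c : ℝ} (hc : 0 ≤ c) (v : ι → ℝ) :
    (c • Matrix.vecMulVec v v).PosSemidef := by
  refine Matrix.posSemidef_iff_dotProduct_mulVec.mpr ⟨?_, fun x => ?_⟩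
  · ext a b
    simp [Matrix.vecMulVec, Matrix.conjTranspose_apply, mul_comm]
  · have hx : star x = x := by funext i; simp
    have : (star x) ⬝ᵥ ((c • Matrix.vecMulVec v v) *ᵥ x) = c * (∑ a, v a * x a) ^ 2 := by
      rw [hx]
      simp only [dotProduct, Matrix.mulVec, Matrix.smul_apply, Matrix.vecMulVec_apply,
        smul_eq_mul]
      rw [sq, Finset.sum_mul_sum, Finset.mul_sum]
      refine Finset.sum_congr rfl fun a _ => ?_
      rw [Finset.mul_sum, Finset.mul_sum]
      refine Finset.sum_congr rfl fun b _ => ?_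
      ring
    rw [this]
    exact mul_nonneg hc (sq_nonneg _)

lemma halfAdd_posSemidef {ι : Type*} [Fintype ι] {A B : Matrix ι ι ℝ}
    (hA : A.PosSemidef) (hB : B.PosSemidef) : ((2:ℝ)⁻¹ • (A + B)).PosSemidef := by
  refine Matrix.posSemidef_iff_dotProduct_mulVec.mpr ⟨?_, fun x => ?_⟩
  · show _ = _
    rw [Matrix.conjTranspose_smul, Matrix.conjTranspose_add, hA.1.eq, hB.1.eq]
    simp
  · have h1 := hA.dotProduct_mulVec_nonneg x
    have h2 := hB.dotProduct_mulVec_nonneg x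
    simp only [Matrix.smul_mulVec, Matrix.add_mulVec, dotProduct_smul,
      dotProduct_add, smul_eq_mul] at *
    linarith

lemma momMat_point {n : ℕ} (d : ℕ) (u : Fin n → ℝ) :
    momMat n d (fun α => mono u α) =
      Matrix.vecMulVec (fun a : Idx n d => mono u (fun i => (a.1 i : ℕ)))
        (fun a : Idx n d => mono u (fun i => (a.1 i : ℕ))) := by
  ext a b
  show mono u (fun i => (a.1 i : ℕ) + (b.1 i : ℕ)) = _
  rw [mono_funadd]
  rfl

lemma locMat_point {n : ℕ} (g : MvPolynomial (Fin n) ℝ) (m : ℕ) (u : Fin n → ℝ) :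
    locMat g m (fun α => mono u α) =
      (MvPolynomial.eval u g) •
        Matrix.vecMulVec (fun a : Idx n m => mono u (fun i => (a.1 i : ℕ)))
          (fun a : Idx n m => mono u (fun i => (a.1 i : ℕ))) := by
  ext a b
  show (∑ γ ∈ g.support, g.coeff γ * mono u (fun i => γ i + (a.1 i : ℕ) + (b.1 i : ℕ))) = _
  rw [Matrix.smul_apply, Matrix.vecMulVec_apply, MvPolynomial.eval_eq', smul_eq_mul,
    Finset.sum_mul]
  refine Finset.sum_congr rfl fun γ _ => ?_
  have h1 : mono u (fun i => γ i + (a.1 i : ℕ) + (b.1 i : ℕ))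
      = mono u (fun i => γ i) * mono u (fun i => (a.1 i : ℕ)) * mono u (fun i => (b.1 i : ℕ)) := by
    rw [show (fun i => γ i + (a.1 i : ℕ) + (b.1 i : ℕ))
        = fun i => (γ i + (a.1 i : ℕ)) + (b.1 i : ℕ) from rfl, mono_funadd, mono_funadd]
  rw [h1]
  have h2 : mono u (fun i => γ i) = ∏ i, u i ^ γ i := rfl
  rw [h2]
  ring

lemma riesz_point {n : ℕ} (f : MvPolynomial (Fin n) ℝ) (u : Fin n → ℝ) :
    riesz f (fun α => mono u α) = MvPolynomial.eval u f := by
  rw [riesz, MvPolynomial.eval_eq']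
  rfl

lemma feas_point {n d0 : ℕ} (u : Fin n → ℝ) (hu0 : ∀ i, 0 ≤ u i) (hu1 : ∑ i, u i ≤ 1) :
    Feas n d0 (fun α => mono u α) := by
  refine ⟨by simp [mono], ?_, fun i => ?_, ?_⟩
  · rw [momMat_point]
    have h := smul_vecMulVec_posSemidef (c := (1:ℝ)) zero_le_one
      (fun a : Idx n d0 => mono u (fun i => (a.1 i : ℕ)))
    rwa [one_smul] at h
  · rw [locMat_point]
    exact smul_vecMulVec_posSemidef (by simp [hu0 i]) _
  · rw [locMat_point]
    refine smul_vecMulVec_posSemidef ?_ _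
    simp only [map_sub, _root_.map_one, map_sum, MvPolynomial.eval_X]
    linarith

lemma feas_mid {n d0 : ℕ} {y1 y2 : (Fin n → ℕ) → ℝ} (h1 : Feas n d0 y1) (h2 : Feas n d0 y2) :
    Feas n d0 (fun α => (y1 α + y2 α) / 2) := by
  have hmom : momMat n d0 (fun α => (y1 α + y2 α) / 2)
      = (2:ℝ)⁻¹ • (momMat n d0 y1 + momMat n d0 y2) := by
    ext a b
    show (y1 _ + y2 _) / 2 = _
    rw [Matrix.smul_apply, Matrix.add_apply, smul_eq_mul]
    show _ = 2⁻¹ * (y1 _ + y2 _)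
    ring
  have hloc : ∀ (g : MvPolynomial (Fin n) ℝ) (m : ℕ),
      locMat g m (fun α => (y1 α + y2 α) / 2)
        = (2:ℝ)⁻¹ • (locMat g m y1 + locMat g m y2) := by
    intro g m
    ext a b
    rw [Matrix.smul_apply, Matrix.add_apply, smul_eq_mul]
    show (∑ γ ∈ g.support, g.coeff γ * ((y1 _ + y2 _) / 2)) = _
    show _ = 2⁻¹ * ((∑ γ ∈ g.support, g.coeff γ * y1 _) + ∑ γ ∈ g.support, g.coeff γ * y2 _)
    rw [← Finset.sum_add_distrib, Finset.mul_sum]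
    refine Finset.sum_congr rfl fun γ _ => ?_
    ring
  refine ⟨?_, ?_, fun i => ?_, ?_⟩
  · show (y1 0 + y2 0) / 2 = 1
    rw [h1.1, h2.1]; norm_num
  · rw [hmom]; exact halfAdd_posSemidef h1.2.1 h2.2.1
  · rw [hloc]; exact halfAdd_posSemidef (h1.2.2.1 i) (h2.2.2.1 i)
  · rw [hloc]; exact halfAdd_posSemidef h1.2.2.2 h2.2.2.2

lemma riesz_mid {n : ℕ} (f : MvPolynomial (Fin n) ℝ) (y1 y2 : (Fin n → ℕ) → ℝ) :
    riesz f (fun α => (y1 α + y2 α) / 2) = (riesz f y1 + riesz f y2) / 2 := by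
  rw [riesz, riesz, riesz, ← Finset.sum_add_distrib, Finset.sum_div]
  refine Finset.sum_congr rfl fun γ _ => ?_
  ring

lemma vecOf_mid (n d : ℕ) (y1 y2 : (Fin n → ℕ) → ℝ) :
    vecOf n d (fun α => (y1 α + y2 α) / 2) = (2:ℝ)⁻¹ • (vecOf n d y1 + vecOf n d y2) := by
  ext a
  show (y1 _ + y2 _) / 2 = (2:ℝ)⁻¹ • (vecOf n d y1 a + vecOf n d y2 a)
  rw [smul_eq_mul]
  show _ = 2⁻¹ * (y1 _ + y2 _)
  ring

/-- the zero index -/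
def idx0 (n d : ℕ) : Idx n d := ⟨fun _ => ⟨0, Nat.succ_pos d⟩, by simp⟩

lemma vecOf_idx0 (n d : ℕ) (y : (Fin n → ℕ) → ℝ) : vecOf n d y (idx0 n d) = y 0 := rfl

lemma key {n d0 : ℕ} (fN : MvPolynomial (Fin n) ℝ) {ε : ℝ} (hε : 0 < ε)
    {y1 y2 : (Fin n → ℕ) → ℝ} (h1 : Feas n d0 y1) (h2 : Feas n d0 y2)
    (hopt : ∀ y, Feas n d0 y → riesz fN y1 + ε * tmsNorm n (2 * d0) y1 ≤
      riesz fN y + ε * tmsNorm n (2 * d0) y)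
    (heq : riesz fN y1 + ε * tmsNorm n (2 * d0) y1 =
      riesz fN y2 + ε * tmsNorm n (2 * d0) y2) :
    ∀ α : Fin n → ℕ, (∑ i, α i) ≤ 2 * d0 → y1 α = y2 α := by
  set A := vecOf n (2 * d0) y1 with hA
  set B := vecOf n (2 * d0) y2 with hB
  have hmid := hopt _ (feas_mid h1 h2)
  rw [riesz_mid, tmsNorm_eq n _ (fun α => (y1 α + y2 α) / 2), vecOf_mid,
    tmsNorm_eq n _ y1] at hmid
  rw [tmsNorm_eq, tmsNorm_eq] at heq
  rw [norm_smul] at hmid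
  have h2n : ‖(2:ℝ)⁻¹‖ = 2⁻¹ := by rw [Real.norm_eq_abs]; norm_num
  rw [h2n] at hmid
  have hnorm : ‖A + B‖ = ‖A‖ + ‖B‖ := by
    refine le_antisymm (norm_add_le _ _) ?_
    have hx : ε * (‖A‖ + ‖B‖) ≤ ε * ‖A + B‖ := by nlinarith [hmid, heq]
    exact le_of_mul_le_mul_left hx hε
  have hray : SameRay ℝ A B := sameRay_iff_norm_add.mpr hnorm
  have hA1 : A (idx0 n (2 * d0)) = 1 := h1.1
  have hB1 : B (idx0 n (2 * d0)) = 1 := h2.1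
  have hA0 : A ≠ 0 := fun h => by rw [h] at hA1; simp at hA1
  have hB0 : B ≠ 0 := fun h => by rw [h] at hB1; simp at hB1
  obtain ⟨r, s, hr, hs, hrs⟩ := hray.exists_pos hA0 hB0
  have hrseq : r = s := by
    have := congrArg (fun v => v (idx0 n (2 * d0))) hrs
    simpa [hA1, hB1] using this
  subst hrseq
  have hABeq : A = B := smul_right_injective _ (ne_of_gt hr) hrs
  intro α hα
  have hle : ∀ i, α i ≤ 2 * d0 := fun i =>
    le_trans (Finset.single_le_sum (f := fun j => α j) (fun j _ => Nat.zero_le _)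
      (Finset.mem_univ i)) hα
  set a : Idx n (2 * d0) := ⟨fun i => ⟨α i, Nat.lt_succ_of_le (hle i)⟩, by simpa using hα⟩ with ha
  have := congrArg (fun v => v a) hABeq
  simpa [hA, hB, vecOf] using this

lemma rank_stuff {n d0 : ℕ} (u : Fin n → ℝ) :
    (momMat n d0 (fun α => mono u α)).rank = 1 := by
  rw [momMat_point, Matrix.vecMulVec_eq (Fin 1), ← Matrix.transpose_replicateRow,
    Matrix.rank_transpose_mul_self]
  rw [Matrix.rank_eq_finrank_span_row]
  have hw : (fun a : Idx n d0 => mono u (fun i => (a.1 i : ℕ))) (idx0 n d0) = 1 := by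
    simp only []
    show mono u (fun _ => 0) = 1
    simp [mono]
  have hrange : Set.range (Matrix.replicateRow (Fin 1) (fun a : Idx n d0 => mono u (fun i => (a.1 i : ℕ)))).row
      = {fun a : Idx n d0 => mono u (fun i => (a.1 i : ℕ))} := by
    ext w
    constructor
    · rintro ⟨i, rfl⟩; rfl
    · rintro rfl; exact ⟨0, rfl⟩
  rw [hrange]
  have hne : (fun a : Idx n d0 => mono u (fun i => (a.1 i : ℕ))) ≠ 0 := by
    intro h
    have h2 := congrFun h (idx0 n d0)
    simp only [Pi.zero_apply] at h2
    rw [show (mono u fun i => (((idx0 n d0).1 i : Fin (d0 + 1)) : ℕ)) = 1 by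
      simp [mono, idx0]] at h2
    exact one_ne_zero h2
  exact finrank_span_singleton hne

end Helpers

/-- converse direction of Theorem 3.2: if the moment relaxation
of the PSAA model is tight, then any minimizer `y*` of the relaxation has a
rank-one moment matrix; in fact `y* = [u*]_{2d₀}` for the PSAA minimizer `u*`,
and `y*` is the unique minimizer of the relaxation. -/
theorem stmt_10 (n d0 : ℕ) (hd0 : 1 ≤ d0)
    (fN : MvPolynomial (Fin n) ℝ) (hdeg : fN.totalDegree ≤ 2 * d0)
    (ε : ℝ) (hε : 0 < ε)
    (ustar : Fin n → ℝ) (hustar : (∀ i, 0 ≤ ustar i) ∧ ∑ i, ustar i ≤ 1)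
    (hustarmin : ∀ x : Fin n → ℝ, (∀ i, 0 ≤ x i) → ∑ i, x i ≤ 1 →
      MvPolynomial.eval ustar fN + ε * tmsNorm n (2 * d0) (fun α => mono ustar α) ≤
        MvPolynomial.eval x fN + ε * tmsNorm n (2 * d0) (fun α => mono x α))
    (ystar : (Fin n → ℕ) → ℝ)
    (hfeas : Feas n d0 ystar)
    (hmin : ∀ y : (Fin n → ℕ) → ℝ, Feas n d0 y →
      riesz fN ystar + ε * tmsNorm n (2 * d0) ystar ≤
        riesz fN y + ε * tmsNorm n (2 * d0) y)
    (htight : riesz fN ystar + ε * tmsNorm n (2 * d0) ystar =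
      MvPolynomial.eval ustar fN + ε * tmsNorm n (2 * d0) (fun α => mono ustar α)) :
    (momMat n d0 ystar).rank = 1 ∧
    (∀ α : Fin n → ℕ, (∑ i, α i) ≤ 2 * d0 → ystar α = mono ustar α) ∧
    (∀ y : (Fin n → ℕ) → ℝ, Feas n d0 y →
      riesz fN y + ε * tmsNorm n (2 * d0) y =
        riesz fN ystar + ε * tmsNorm n (2 * d0) ystar →
      ∀ α : Fin n → ℕ, (∑ i, α i) ≤ 2 * d0 → y α = ystar α) := by
  have hfu : Feas n d0 (fun α => mono ustar α) := feas_point ustar hustar.1 hustar.2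
  have heq : riesz fN ystar + ε * tmsNorm n (2 * d0) ystar =
      riesz fN (fun α => mono ustar α) + ε * tmsNorm n (2 * d0) (fun α => mono ustar α) := by
    rw [riesz_point]; exact htight
  have hpart2 := key fN hε hfeas hfu hmin heq
  refine ⟨?_, hpart2, ?_⟩
  · have hmm : momMat n d0 ystar = momMat n d0 (fun α => mono ustar α) := by
      ext a b
      show ystar _ = mono ustar _
      refine hpart2 _ ?_
      have ha := a.2
      have hb := b.2
      calc ∑ i, ((a.1 i : ℕ) + (b.1 i : ℕ))
          = (∑ i, (a.1 i : ℕ)) + ∑ i, (b.1 i : ℕ) := Finset.sum_add_distrib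
        _ ≤ 2 * d0 := by omega
    rw [hmm]
    exact rank_stuff ustar
  · intro y hy heqy α hα
    exact (key fN hε hfeas hy hmin heqy.symm α hα).symm
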